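/- The monoid of indexed forests (equivalently, the Thompson monoid) is right-cancellable: for a fixed forest G, the map H ↦ H·G is injective. -/

import Mathlib

/-- The defining relations of the Thompson monoid: `i · j = j · (i+1)` for
`i > j`. -/
def thRel : FreeMonoid ℕ → FreeMonoid ℕ → Prop := fun a b =>
  ∃ i j : ℕ, j < i ∧ a = FreeMonoid.of i * FreeMonoid.of j ∧
    b = FreeMonoid.of j * FreeMonoid.of (i + 1)

def thCon : Con (FreeMonoid ℕ) := conGen thRel

/-- The Thompson monoid (equivalently, the monoid of indexed forests under
grafting). -/
def Th : Type := thCon.Quotient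

noncomputable instance : Monoid Th := Con.monoid thCon

open List

/-- Insert a letter `x` at the right of a word `s`, normalizing. -/
def ins (s : List ℕ) (x : ℕ) : List ℕ :=
  s.takeWhile (· ≤ x) ++ x :: (s.dropWhile (· ≤ x)).map (· + 1)

lemma takeWhile_eq_of (p : ℕ → Bool) (a b : List ℕ) (ha : ∀ y ∈ a, p y)
    (hb : ∀ y ∈ b, ¬ p y) : (a ++ b).takeWhile p = a := by
  induction a with
  | nil => cases b with
    | nil => rfl
    | cons c b' => simp [List.takeWhile_cons, hb c (by simp)]
  | cons c a' ih =>
    rw [List.cons_append, List.takeWhile_cons_of_pos (ha c (by simp)),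
      ih (fun y hy => ha y (by simp [hy]))]

lemma dropWhile_eq_of (p : ℕ → Bool) (a b : List ℕ) (ha : ∀ y ∈ a, p y)
    (hb : ∀ y ∈ b, ¬ p y) : (a ++ b).dropWhile p = b := by
  induction a with
  | nil => cases b with
    | nil => rfl
    | cons c b' => simp [List.dropWhile_cons, hb c (by simp)]
  | cons c a' ih =>
    rw [List.cons_append, List.dropWhile_cons_of_pos (ha c (by simp))]
    exact ih (fun y hy => ha y (by simp [hy]))

lemma ins_eq {a b : List ℕ} {x : ℕ} (ha : ∀ y ∈ a, y ≤ x) (hb : ∀ y ∈ b, x < y) :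
    ins (a ++ b) x = a ++ x :: b.map (· + 1) := by
  unfold ins
  rw [takeWhile_eq_of _ a b (fun y hy => by simpa using ha y hy)
      (fun y hy => by simpa using hb y hy),
    dropWhile_eq_of _ a b (fun y hy => by simpa using ha y hy)
      (fun y hy => by simpa using hb y hy)]

lemma sorted_split {s : List ℕ} (hs : s.Pairwise (· ≤ ·)) (x : ℕ) :
    s = s.takeWhile (· ≤ x) ++ s.dropWhile (· ≤ x) ∧
    (∀ y ∈ s.takeWhile (· ≤ x), y ≤ x) ∧ (∀ y ∈ s.dropWhile (· ≤ x), x < y) := by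
  refine ⟨(List.takeWhile_append_dropWhile).symm,
    fun y hy => by simpa using List.mem_takeWhile_imp hy, ?_⟩
  induction s with
  | nil => simp
  | cons c s' ih =>
    by_cases hc : c ≤ x
    · rw [List.dropWhile_cons_of_pos (by simpa using hc)]
      exact ih hs.of_cons
    · rw [List.dropWhile_cons_of_neg (by simpa using hc)]
      intro y hy
      rcases List.mem_cons.1 hy with rfl | hy
      · omega
      · exact lt_of_lt_of_le (by omega) (List.rel_of_pairwise_cons hs hy)

lemma sorted_ins_aux {a b : List ℕ} {x : ℕ} (hab : (a ++ b).Pairwise (· ≤ ·))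
    (ha : ∀ y ∈ a, y ≤ x) (hb : ∀ y ∈ b, x < y) :
    (a ++ x :: b.map (· + 1)).Pairwise (· ≤ ·) := by
  rw [List.pairwise_append] at hab ⊢
  refine ⟨hab.1, ?_, ?_⟩
  · rw [List.pairwise_cons]
    constructor
    · intro y hy
      rcases List.mem_map.1 hy with ⟨z, hz, rfl⟩
      have := hb z hz; omega
    · rw [List.pairwise_map]
      exact hab.2.1.imp (by omega)
  · intro y hy z hz
    rcases List.mem_cons.1 hz with rfl | hz
    · exact ha y hy
    · rcases List.mem_map.1 hz with ⟨w, hw, rfl⟩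
      have := hab.2.2 y hy w hw; omega

lemma ins_sorted {s : List ℕ} (hs : s.Pairwise (· ≤ ·)) (x : ℕ) :
    (ins s x).Pairwise (· ≤ ·) := by
  obtain ⟨he, ha, hb⟩ := sorted_split hs x
  rw [show ins s x = ins (s.takeWhile (· ≤ x) ++ s.dropWhile (· ≤ x)) x by rw [← he],
    ins_eq ha hb]
  exact sorted_ins_aux (by rwa [← he]) ha hb

lemma ins_exchange {s : List ℕ} (hs : s.Pairwise (· ≤ ·)) {i j : ℕ} (h : j < i) :
    ins (ins s j) (i + 1) = ins (ins s i) j := by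
  obtain ⟨he, hA, hD⟩ := sorted_split hs j
  set A := s.takeWhile (· ≤ j) with hAdef
  set D := s.dropWhile (· ≤ j) with hDdef
  have hDsorted : D.Pairwise (· ≤ ·) := hs.sublist (List.dropWhile_sublist _)
  obtain ⟨heD, hB, hC⟩ := sorted_split hDsorted i
  set B := D.takeWhile (· ≤ i) with hBdef
  set C := D.dropWhile (· ≤ i) with hCdef
  have hBj : ∀ y ∈ B, j < y := fun y hy => hD y (by rw [heD]; exact List.mem_append_left _ hy)
  have hCj : ∀ y ∈ C, j < y := fun y hy => hD y (by rw [heD]; exact List.mem_append_right _ hy)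
  have hsABC : s = A ++ (B ++ C) := by rw [he, heD]
  -- LHS
  have l1 : ins s j = A ++ j :: (B ++ C).map (· + 1) := by
    rw [hsABC]; exact ins_eq hA (fun y hy => by
      rcases List.mem_append.1 hy with hy | hy; exacts [hBj y hy, hCj y hy])
  have l2 : ins (ins s j) (i + 1)
      = (A ++ j :: B.map (· + 1)) ++ (i + 1) :: (C.map (· + 1)).map (· + 1) := by
    rw [l1, List.map_append, show A ++ j :: (B.map (· + 1) ++ C.map (· + 1))
        = (A ++ j :: B.map (· + 1)) ++ C.map (· + 1) by simp]
    refine ins_eq ?_ ?_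
    · intro y hy
      rcases List.mem_append.1 hy with hy | hy
      · have := hA y hy; omega
      · rcases List.mem_cons.1 hy with rfl | hy
        · omega
        · rcases List.mem_map.1 hy with ⟨z, hz, rfl⟩
          have := hB z hz; omega
    · intro y hy
      rcases List.mem_map.1 hy with ⟨z, hz, rfl⟩
      have := hC z hz; omega
  -- RHS
  have r1 : ins s i = (A ++ B) ++ i :: C.map (· + 1) := by
    rw [hsABC, ← List.append_assoc]
    refine ins_eq ?_ hC
    intro y hy
    rcases List.mem_append.1 hy with hy | hy
    · have := hA y hy; omega
    · exact hB y hy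
  have r2 : ins (ins s i) j = A ++ j :: (B ++ i :: C.map (· + 1)).map (· + 1) := by
    rw [r1, List.append_assoc]
    refine ins_eq hA ?_
    intro y hy
    rcases List.mem_append.1 hy with hy | hy
    · exact hBj y hy
    · rcases List.mem_cons.1 hy with rfl | hy
      · exact h
      · rcases List.mem_map.1 hy with ⟨z, hz, rfl⟩
        have := hC z hz; omega
  rw [l2, r2]; simp

lemma ins_injective {s t : List ℕ} {x : ℕ} (hs : s.Pairwise (· ≤ ·))
    (ht : t.Pairwise (· ≤ ·)) (h : ins s x = ins t x) : s = t := by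
  obtain ⟨hes, hAs, hBs⟩ := sorted_split hs x
  obtain ⟨het, hAt, hBt⟩ := sorted_split ht x
  rw [hes, ins_eq hAs hBs, het, ins_eq hAt hBt] at h
  have key : ∀ (a b : List ℕ), (∀ y ∈ a, y ≤ x) → (∀ y ∈ b, x < y) →
      (a ++ x :: b.map (· + 1)).takeWhile (· ≤ x) = a ++ [x] ∧
      (a ++ x :: b.map (· + 1)).dropWhile (· ≤ x) = b.map (· + 1) := by
    intro a b ha hb
    have h1 : ∀ y ∈ a ++ [x], (fun y => decide (y ≤ x)) y = true := by
      intro y hy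
      rcases List.mem_append.1 hy with hy | hy
      · simpa using ha y hy
      · simp at hy; simp [hy]
    have h2 : ∀ y ∈ b.map (· + 1), ¬ (fun y => decide (y ≤ x)) y = true := by
      intro y hy
      rcases List.mem_map.1 hy with ⟨z, hz, rfl⟩
      have := hb z hz; simp; omega
    have hre : a ++ x :: b.map (· + 1) = (a ++ [x]) ++ b.map (· + 1) := by simp
    rw [hre, takeWhile_eq_of _ _ _ h1 h2, dropWhile_eq_of _ _ _ h1 h2]
    exact ⟨rfl, rfl⟩
  obtain ⟨t1, d1⟩ := key _ _ hAs hBs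
  obtain ⟨t2, d2⟩ := key _ _ hAt hBt
  have hA : s.takeWhile (· ≤ x) ++ [x] = t.takeWhile (· ≤ x) ++ [x] := by
    rw [← t1, ← t2, h]
  have hB : (s.dropWhile (· ≤ x)).map (· + 1) = (t.dropWhile (· ≤ x)).map (· + 1) := by
    rw [← d1, ← d2, h]
  have hA' : s.takeWhile (· ≤ x) = t.takeWhile (· ≤ x) := by
    have := congrArg List.dropLast hA; simpa using this
  have hB' : s.dropWhile (· ≤ x) = t.dropWhile (· ≤ x) :=
    List.map_injective_iff.2 (fun a b => by omega) hB
  rw [hes, het, hA', hB']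

def nf (w : List ℕ) : List ℕ := w.foldl ins []

lemma foldl_ins_sorted : ∀ (v s : List ℕ), s.Pairwise (· ≤ ·) →
    (v.foldl ins s).Pairwise (· ≤ ·)
  | [], _, hs => hs
  | x :: v, s, hs => foldl_ins_sorted v (ins s x) (ins_sorted hs x)

lemma nf_sorted (w : List ℕ) : (nf w).Pairwise (· ≤ ·) :=
  foldl_ins_sorted w [] (by simp)

/-- Elementary rewriting step for the Thompson relations, at the list level. -/
inductive Step : List ℕ → List ℕ → Prop
  | mk (a b : List ℕ) (i j : ℕ) (h : j < i) :
      Step (a ++ i :: j :: b) (a ++ j :: (i + 1) :: b)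

lemma Step.append_right {u v : List ℕ} (h : Step u v) (w : List ℕ) :
    Step (u ++ w) (v ++ w) := by
  rcases h with ⟨a, b, i, j, h⟩
  simpa using Step.mk a (b ++ w) i j h

lemma foldl_ins_step {u v : List ℕ} (h : Step u v) :
    ∀ s : List ℕ, s.Pairwise (· ≤ ·) → u.foldl ins s = v.foldl ins s := by
  rcases h with ⟨a, b, i, j, h⟩
  intro s hs
  rw [show a ++ i :: j :: b = (a ++ [i, j]) ++ b by simp,
    show a ++ j :: (i+1) :: b = (a ++ [j, i+1]) ++ b by simp,
    List.foldl_append, List.foldl_append, List.foldl_append, List.foldl_append]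
  congr 1
  simp only [List.foldl_cons, List.foldl_nil]
  exact (ins_exchange (foldl_ins_sorted a s hs) h).symm

lemma foldl_ins_steps {u v : List ℕ} (h : Relation.ReflTransGen Step u v)
    {s : List ℕ} (hs : s.Pairwise (· ≤ ·)) : u.foldl ins s = v.foldl ins s := by
  induction h with
  | refl => rfl
  | tail _ hstep ih => rw [ih, foldl_ins_step hstep s hs]

lemma steps_append_right {u v : List ℕ} (h : Relation.ReflTransGen Step u v)
    (w : List ℕ) : Relation.ReflTransGen Step (u ++ w) (v ++ w) := by
  induction h with
  | refl => exact Relation.ReflTransGen.refl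
  | tail _ hs ih => exact ih.tail (hs.append_right w)

/-- Bubbling a small letter to the left. -/
lemma steps_bubble : ∀ (B : List ℕ) (A : List ℕ) (x : ℕ), (∀ y ∈ B, x < y) →
    Relation.ReflTransGen Step (A ++ B ++ [x]) (A ++ x :: B.map (· + 1))
  | [], A, x, _ => by simp; exact Relation.ReflTransGen.refl
  | b :: B', A, x, h => by
    have h1 := steps_bubble B' (A ++ [b]) x (fun y hy => h y (by simp [hy]))
    have h2 : Step (A ++ b :: x :: B'.map (· + 1)) (A ++ x :: (b + 1) :: B'.map (· + 1)) :=
      Step.mk A (B'.map (· + 1)) b x (h b (by simp))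
    have h1' : Relation.ReflTransGen Step (A ++ (b :: B') ++ [x])
        (A ++ b :: x :: B'.map (· + 1)) := by simpa using h1
    simpa using h1'.tail h2

lemma steps_ins {s : List ℕ} (hs : s.Pairwise (· ≤ ·)) (x : ℕ) :
    Relation.ReflTransGen Step (s ++ [x]) (ins s x) := by
  obtain ⟨he, ha, hb⟩ := sorted_split hs x
  rw [show s ++ [x] = s.takeWhile (· ≤ x) ++ s.dropWhile (· ≤ x) ++ [x] by rw [← he],
    show ins s x = ins (s.takeWhile (· ≤ x) ++ s.dropWhile (· ≤ x)) x by rw [← he],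
    ins_eq ha hb]
  exact steps_bubble _ _ _ hb

lemma steps_foldl : ∀ (v s : List ℕ), s.Pairwise (· ≤ ·) →
    Relation.ReflTransGen Step (s ++ v) (v.foldl ins s)
  | [], s, _ => by simp; exact Relation.ReflTransGen.refl
  | x :: v, s, hs => by
    have h1 : Relation.ReflTransGen Step ((s ++ [x]) ++ v) (ins s x ++ v) :=
      steps_append_right (steps_ins hs x) v
    have h2 := steps_foldl v (ins s x) (ins_sorted hs x)
    simp only [List.foldl_cons]
    exact Relation.ReflTransGen.trans (by simpa using h1) h2

lemma steps_nf (w : List ℕ) : Relation.ReflTransGen Step w (nf w) := by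
  simpa [nf] using steps_foldl w [] (by simp)


lemma thCon_iff {a b : FreeMonoid ℕ} : thCon a b ↔ ConGen.Rel thRel a b := Iff.rfl

lemma thCon_of_step {u v : List ℕ} (h : Step u v) :
    thCon (FreeMonoid.ofList u) (FreeMonoid.ofList v) := by
  rcases h with ⟨a, b, i, j, h⟩
  have key : ∀ (x y : ℕ), FreeMonoid.ofList (a ++ x :: y :: b)
      = FreeMonoid.ofList a * (FreeMonoid.of x * FreeMonoid.of y) * FreeMonoid.ofList b := by
    intro x y
    rw [← FreeMonoid.ofList_singleton x, ← FreeMonoid.ofList_singleton y,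
      ← FreeMonoid.ofList_append, ← FreeMonoid.ofList_append, ← FreeMonoid.ofList_append]
    simp
  have e1 := key i j
  have e2 := key j (i + 1)
  rw [e1, e2]
  exact thCon.mul (thCon.mul (thCon.refl _)
    (thCon_iff.2 (ConGen.Rel.of _ _ ⟨i, j, h, rfl, rfl⟩))) (thCon.refl _)

lemma thCon_of_steps {u v : List ℕ} (h : Relation.ReflTransGen Step u v) :
    thCon (FreeMonoid.ofList u) (FreeMonoid.ofList v) := by
  induction h with
  | refl => exact thCon.refl _
  | tail _ hs ih => exact thCon.trans ih (thCon_of_step hs)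

lemma nf_append (u v : List ℕ) : nf (u ++ v) = (nf v).foldl ins (nf u) := by
  rw [nf, List.foldl_append]
  exact foldl_ins_steps (steps_nf v) (nf_sorted u)

lemma nf_invariant {a b : FreeMonoid ℕ} (h : thCon a b) :
    nf a.toList = nf b.toList := by
  have h' := thCon_iff.1 h
  clear h
  induction h' with
  | of x y hxy =>
    obtain ⟨i, j, hij, rfl, rfl⟩ := hxy
    have : Step [i, j] [j, i + 1] := by simpa using Step.mk [] [] i j hij
    exact foldl_ins_step this [] (by simp)
  | refl x => rfl
  | symm _ ih => exact ih.symm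
  | trans _ _ ih1 ih2 => exact ih1.trans ih2
  | mul _ _ ih1 ih2 =>
    rw [FreeMonoid.toList_mul, FreeMonoid.toList_mul, nf_append, nf_append, ih1, ih2]

lemma thCon_nf (w : FreeMonoid ℕ) : thCon w (FreeMonoid.ofList (nf w.toList)) := by
  have := thCon_of_steps (steps_nf w.toList)
  simpa using this

lemma foldl_ins_inj : ∀ (g s t : List ℕ), s.Pairwise (· ≤ ·) → t.Pairwise (· ≤ ·) →
    g.foldl ins s = g.foldl ins t → s = t
  | [], _, _, _, _, h => h
  | x :: g, s, t, hs, ht, h =>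
    ins_injective hs ht
      (foldl_ins_inj g _ _ (ins_sorted hs x) (ins_sorted ht x) h)



/-- The Thompson monoid is right-cancellable: for each fixed
`G`, the map `H ↦ H * G` is injective. -/
theorem thompson_right_cancellable (G : Th) :
    Function.Injective (fun H : Th => H * G) := by
  intro H H' h
  induction G using Con.induction_on with
  | H g =>
  induction H using Con.induction_on with
  | H u =>
  induction H' using Con.induction_on with
  | H v =>
  simp only [← Con.coe_mul] at h
  have hc : thCon (u * g) (v * g) := thCon.eq.1 h
  have hnf := nf_invariant hc
  rw [FreeMonoid.toList_mul, FreeMonoid.toList_mul, nf_append, nf_append] at hnf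
  have huv : nf u.toList = nf v.toList :=
    foldl_ins_inj _ _ _ (nf_sorted _) (nf_sorted _) hnf
  have : thCon u v :=
    thCon.trans (thCon_nf u) (huv ▸ thCon.symm (thCon_nf v))
  exact thCon.eq.2 this
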